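/- Energy conservation of the free 3D pendulum: suppose J ∈ ℝ³ˣ³ is symmetric, R : ℝ → ℝ³ˣ³ and Ω : ℝ → ℝ³ are differentiable, R(t) ∈ SO(3) for all t, and with Π(t) = J Ω(t) they satisfy Ṙ(t) = R(t) S(Ω(t)) and Π̇(t) = −Ω(t) × Π(t) + m g ρ × (R(t)ᵀ e₃) for all t. Then the total energy E(t) = ½ Ω(t)ᵀ J Ω(t) − m g e₃ᵀ (R(t) ρ) is constant. -/

import Mathlib

open Matrix
open scoped Matrix

attribute [local instance] Matrix.normedAddCommGroup Matrix.normedSpace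

/-- The hat map `S : ℝ³ → 𝔰𝔬(3)`, defined by `S(x) y = x × y`. -/
def hat (x : Fin 3 → ℝ) : Matrix (Fin 3) (Fin 3) ℝ :=
  !![0, -x 2, x 1; x 2, 0, -x 0; -x 1, x 0, 0]

/-- The gravity direction `e₃ = (0,0,1)`. -/
def e3 : Fin 3 → ℝ := ![0, 0, 1]

private lemma hasDerivAt_dot {f g : ℝ → Fin 3 → ℝ} {f' g' : Fin 3 → ℝ} {t : ℝ}
    (hf : HasDerivAt f f' t) (hg : HasDerivAt g g' t) :
    HasDerivAt (fun s => f s ⬝ᵥ g s) (f' ⬝ᵥ g t + f t ⬝ᵥ g') t := by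
  simp only [dotProduct, ← Finset.sum_add_distrib]
  exact HasDerivAt.fun_sum fun i _ => (hasDerivAt_pi.1 hf i).mul (hasDerivAt_pi.1 hg i)

private lemma hasDerivAt_mulVec_const {M : ℝ → Matrix (Fin 3) (Fin 3) ℝ}
    {M' : Matrix (Fin 3) (Fin 3) ℝ} {c : Fin 3 → ℝ} {t : ℝ}
    (hM : HasDerivAt M M' t) :
    HasDerivAt (fun s => M s *ᵥ c) (M' *ᵥ c) t := by
  refine hasDerivAt_pi.2 fun i => ?_
  simp only [mulVec, dotProduct]
  exact HasDerivAt.fun_sum fun j _ =>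
    (hasDerivAt_pi.1 (hasDerivAt_pi.1 hM i) j).mul_const (c j)

private lemma hasDerivAt_constMulVec {f : ℝ → Fin 3 → ℝ} {f' : Fin 3 → ℝ} {t : ℝ}
    (J : Matrix (Fin 3) (Fin 3) ℝ) (hf : HasDerivAt f f' t) :
    HasDerivAt (fun s => J *ᵥ f s) (J *ᵥ f') t := by
  refine hasDerivAt_pi.2 fun i => ?_
  simp only [mulVec, dotProduct]
  exact HasDerivAt.fun_sum fun j _ => (hasDerivAt_pi.1 hf j).const_mul (J i j)

private lemma hat_mulVec (x y : Fin 3 → ℝ) : hat x *ᵥ y = x ⨯₃ y := by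
  ext i
  fin_cases i <;>
    simp [hat, crossProduct, mulVec, dotProduct, Fin.sum_univ_three] <;> ring

private lemma triple_cyclic (a b c : Fin 3 → ℝ) : a ⬝ᵥ (b ⨯₃ c) = c ⬝ᵥ (a ⨯₃ b) := by
  simp [crossProduct, dotProduct, Fin.sum_univ_three]; ring

/-- Energy conservation of the free 3D pendulum: if `J` is symmetric, `R(t) ∈ SO(3)`,
`Ṙ = R S(Ω)` and, with `Π = J Ω`, `Π̇ = −Ω × Π + m g ρ × (Rᵀ e₃)`, then the total energy
`E = ½ Ωᵀ J Ω − m g e₃ᵀ (R ρ)` is constant. -/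
theorem free_pendulum_energy_conserved (m g : ℝ) (ρ : Fin 3 → ℝ)
    (J : Matrix (Fin 3) (Fin 3) ℝ) (hJ : Jᵀ = J)
    (R : ℝ → Matrix (Fin 3) (Fin 3) ℝ) (Ω : ℝ → Fin 3 → ℝ)
    (hSO : ∀ t, (R t)ᵀ * R t = 1 ∧ (R t).det = 1)
    (hΩ : Differentiable ℝ Ω)
    (hR : ∀ t, HasDerivAt R (R t * hat (Ω t)) t)
    (hP : ∀ t, HasDerivAt (fun s => J *ᵥ Ω s)
      (-(Ω t ⨯₃ (J *ᵥ Ω t)) + (m * g) • (ρ ⨯₃ ((R t)ᵀ *ᵥ e3))) t) :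
    ∀ t s : ℝ,
      (1 : ℝ) / 2 * (Ω t ⬝ᵥ (J *ᵥ Ω t)) - m * g * (e3 ⬝ᵥ (R t *ᵥ ρ)) =
      (1 : ℝ) / 2 * (Ω s ⬝ᵥ (J *ᵥ Ω s)) - m * g * (e3 ⬝ᵥ (R s *ᵥ ρ)) := by
  have key : ∀ t, HasDerivAt
      (fun s => (1 : ℝ) / 2 * (Ω s ⬝ᵥ (J *ᵥ Ω s)) - m * g * (e3 ⬝ᵥ (R s *ᵥ ρ))) 0 t := by
    intro t
    set ω' := deriv Ω t with hω'
    have hΩd : HasDerivAt Ω ω' t := (hΩ t).hasDerivAt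
    have hJΩ : HasDerivAt (fun s => J *ᵥ Ω s) (J *ᵥ ω') t := hasDerivAt_constMulVec J hΩd
    have hF : J *ᵥ ω' =
        -(Ω t ⨯₃ (J *ᵥ Ω t)) + (m * g) • (ρ ⨯₃ ((R t)ᵀ *ᵥ e3)) := hJΩ.unique (hP t)
    have hK : HasDerivAt (fun s => Ω s ⬝ᵥ (J *ᵥ Ω s))
        (ω' ⬝ᵥ (J *ᵥ Ω t) + Ω t ⬝ᵥ (J *ᵥ ω')) t := hasDerivAt_dot hΩd hJΩ
    have hV : HasDerivAt (fun s => e3 ⬝ᵥ (R s *ᵥ ρ))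
        (e3 ⬝ᵥ ((R t * hat (Ω t)) *ᵥ ρ)) t := by
      have := hasDerivAt_dot (f := fun _ => e3) (hasDerivAt_const t e3)
        (hasDerivAt_mulVec_const (c := ρ) (hR t))
      simpa using this
    have hE := ((hK.const_mul ((1 : ℝ) / 2)).sub (hV.const_mul (m * g)))
    have hsym : ω' ⬝ᵥ (J *ᵥ Ω t) = Ω t ⬝ᵥ (J *ᵥ ω') := by
      rw [dotProduct_mulVec, ← mulVec_transpose, hJ, dotProduct_comm]
    have hderiv : (1 : ℝ) / 2 * (ω' ⬝ᵥ (J *ᵥ Ω t) + Ω t ⬝ᵥ (J *ᵥ ω')) -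
        m * g * (e3 ⬝ᵥ ((R t * hat (Ω t)) *ᵥ ρ)) = 0 := by
      rw [hsym, ← two_mul]
      have h1 : Ω t ⬝ᵥ (J *ᵥ ω') =
          m * g * (Ω t ⬝ᵥ (ρ ⨯₃ ((R t)ᵀ *ᵥ e3))) := by
        rw [hF]
        have h0 : Ω t ⬝ᵥ (Ω t ⨯₃ (J *ᵥ Ω t)) = 0 := by
          simp [crossProduct, dotProduct, Fin.sum_univ_three]; ring
        simp [dotProduct_add, dotProduct_smul, h0, smul_eq_mul]
      have h2 : e3 ⬝ᵥ ((R t * hat (Ω t)) *ᵥ ρ) =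
          Ω t ⬝ᵥ (ρ ⨯₃ ((R t)ᵀ *ᵥ e3)) := by
        rw [← mulVec_mulVec, hat_mulVec, dotProduct_mulVec, ← mulVec_transpose,
          dotProduct_comm, triple_cyclic]
        exact dotProduct_comm _ _
      rw [h1, h2]
      ring
    rw [← hderiv]
    exact hE
  intro t s
  have hdiff : Differentiable ℝ
      (fun s => (1 : ℝ) / 2 * (Ω s ⬝ᵥ (J *ᵥ Ω s)) - m * g * (e3 ⬝ᵥ (R s *ᵥ ρ))) :=
    fun x => (key x).differentiableAt
  exact is_const_of_deriv_eq_zero hdiff (fun x => (key x).deriv) t s
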